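/- Let X be a Banach A-bimodule such that for every x'' ∈ X**, the map a'' ↦ x''a'' from A** to X** is weak-star to weak continuous. If D : A → X* is a bounded derivation, then D''(A**)·X** ⊆ A*, i.e., for every a'' ∈ A** and x'' ∈ X**, the functional D''(a'')x'' ∈ A*** lies in the canonical image of A*. -/

import Mathlib

set_option maxHeartbeats 1000000

open Filter Topology ContinuousLinearMap NormedSpace

noncomputable section ArensSetup

/-- Shortcut instances on iterated duals of a real normed space (porting aid: without them the
iterated duals below no longer elaborate; they are the instances Mathlib already provides). -/
instance instSeminormedAddCommGroupStrongDualReal {E : Type*} [SeminormedAddCommGroup E]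
    [NormedSpace ℝ E] : SeminormedAddCommGroup (StrongDual ℝ E) := inferInstance

instance instNormedSpaceStrongDualReal {E : Type*} [SeminormedAddCommGroup E]
    [NormedSpace ℝ E] : NormedSpace ℝ (StrongDual ℝ E) := inferInstance

instance instTopologicalSpaceStrongDualReal {E : Type*} [SeminormedAddCommGroup E]
    [NormedSpace ℝ E] : TopologicalSpace (StrongDual ℝ E) := inferInstance

instance instSeminormedAddCommGroupStrongDualReal2 {E : Type*} [SeminormedAddCommGroup E]
    [NormedSpace ℝ E] : SeminormedAddCommGroup (StrongDual ℝ (StrongDual ℝ E)) := inferInstance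

instance instNormedSpaceStrongDualReal2 {E : Type*} [SeminormedAddCommGroup E]
    [NormedSpace ℝ E] : NormedSpace ℝ (StrongDual ℝ (StrongDual ℝ E)) := inferInstance

instance instTopologicalSpaceStrongDualReal2 {E : Type*} [SeminormedAddCommGroup E]
    [NormedSpace ℝ E] : TopologicalSpace (StrongDual ℝ (StrongDual ℝ E)) := inferInstance

instance instSeminormedAddCommGroupStrongDualReal3 {E : Type*} [SeminormedAddCommGroup E]
    [NormedSpace ℝ E] : SeminormedAddCommGroup (StrongDual ℝ (StrongDual ℝ (StrongDual ℝ E))) := inferInstance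

instance instNormedSpaceStrongDualReal3 {E : Type*} [SeminormedAddCommGroup E]
    [NormedSpace ℝ E] : NormedSpace ℝ (StrongDual ℝ (StrongDual ℝ (StrongDual ℝ E))) := inferInstance

instance instTopologicalSpaceStrongDualReal3 {E : Type*} [SeminormedAddCommGroup E]
    [NormedSpace ℝ E] : TopologicalSpace (StrongDual ℝ (StrongDual ℝ (StrongDual ℝ E))) := inferInstance


/-- The adjoint (transpose) of a continuous linear map between normed spaces. -/
def adjCLM {E F : Type*} [SeminormedAddCommGroup E] [NormedSpace ℝ E]
    [SeminormedAddCommGroup F] [NormedSpace ℝ F] (T : E →L[ℝ] F) :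
    StrongDual ℝ F →L[ℝ] StrongDual ℝ E :=
  (ContinuousLinearMap.compL ℝ E F ℝ).flip T

@[simp] theorem adjCLM_apply {E F : Type*} [SeminormedAddCommGroup E] [NormedSpace ℝ E]
    [SeminormedAddCommGroup F] [NormedSpace ℝ F] (T : E →L[ℝ] F) (g : StrongDual ℝ F) (x : E) :
    adjCLM T g x = g (T x) := rfl

/-- One-step Arens-type adjoint of a bounded bilinear map:
`ext1 β g' e = g' ∘ (β e)`. -/
def ext1 {E F G : Type*} [SeminormedAddCommGroup E] [NormedSpace ℝ E]
    [SeminormedAddCommGroup F] [NormedSpace ℝ F] [SeminormedAddCommGroup G] [NormedSpace ℝ G]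
    (β : E →L[ℝ] F →L[ℝ] G) : StrongDual ℝ G →L[ℝ] E →L[ℝ] StrongDual ℝ F :=
  ((ContinuousLinearMap.compL ℝ F G ℝ).flip.comp β).flip

@[simp] theorem ext1_apply {E F G : Type*} [SeminormedAddCommGroup E] [NormedSpace ℝ E]
    [SeminormedAddCommGroup F] [NormedSpace ℝ F] [SeminormedAddCommGroup G] [NormedSpace ℝ G]
    (β : E →L[ℝ] F →L[ℝ] G) (g' : StrongDual ℝ G) (e : E) (f : F) :
    ext1 β g' e f = g' (β e f) := rfl

/-- Triple adjoint: the (first) Arens extension of a bounded bilinear map to the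
second duals. -/
def ext3 {E F G : Type*} [SeminormedAddCommGroup E] [NormedSpace ℝ E]
    [SeminormedAddCommGroup F] [NormedSpace ℝ F] [SeminormedAddCommGroup G] [NormedSpace ℝ G]
    (β : E →L[ℝ] F →L[ℝ] G) :
    StrongDual ℝ (StrongDual ℝ E) →L[ℝ] StrongDual ℝ (StrongDual ℝ F) →L[ℝ] StrongDual ℝ (StrongDual ℝ G) :=
  ext1 (ext1 (ext1 β))

variable (A : Type*) [NonUnitalNormedRing A] [NormedSpace ℝ A]
  [SMulCommClass ℝ A A] [IsScalarTower ℝ A A] [CompleteSpace A]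

/-- The first (left) Arens product on `A**`: `⟨a''b'', a'⟩ = ⟨a'', b''a'⟩`. -/
def fArens : StrongDual ℝ (StrongDual ℝ A) →L[ℝ] StrongDual ℝ (StrongDual ℝ A) →L[ℝ] StrongDual ℝ (StrongDual ℝ A) :=
  ext3 (ContinuousLinearMap.mul ℝ A)

/-- The second (right) Arens product on `A**`: `⟨a''∘b'', a'⟩ = ⟨b'', a'∘a''⟩`. -/
def sArens : StrongDual ℝ (StrongDual ℝ A) →L[ℝ] StrongDual ℝ (StrongDual ℝ A) →L[ℝ] StrongDual ℝ (StrongDual ℝ A) :=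
  (ext3 (ContinuousLinearMap.mul ℝ A).flip).flip

/-- `A` is Arens regular when the two Arens products on `A**` coincide. -/
def ArensRegular : Prop := fArens A = sArens A

variable {A}

/-- Weak-star to weak continuity for a map from the dual of `E` into `F`. -/
def WStarToWCont {E F : Type*} [SeminormedAddCommGroup E] [NormedSpace ℝ E]
    [SeminormedAddCommGroup F] [NormedSpace ℝ F] (f : StrongDual ℝ E → F) : Prop :=
  Continuous fun x : WeakDual ℝ E => toWeakSpace ℝ F (f (WeakDual.toStrongDual x))

variable (A)

/-- The second adjoint `T'' : A** → A**` of `T : A → A`. -/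
def secondAdj (T : A →L[ℝ] A) : StrongDual ℝ (StrongDual ℝ A) →L[ℝ] StrongDual ℝ (StrongDual ℝ A) :=
  adjCLM (adjCLM T)

/-- Left action of `A` on `A*`: `⟨a·a', b⟩ = ⟨a', ba⟩`. -/
def dualLeft : A →L[ℝ] StrongDual ℝ A →L[ℝ] StrongDual ℝ A :=
  (ext1 (ContinuousLinearMap.mul ℝ A).flip).flip

/-- Right action of `A` on `A*`: `⟨a'·a, b⟩ = ⟨a', ab⟩`. -/
def dualRight : StrongDual ℝ A →L[ℝ] A →L[ℝ] StrongDual ℝ A :=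
  ext1 (ContinuousLinearMap.mul ℝ A)

/-- Left action of `A**` (first Arens product) on `A***`. -/
def dualLeft2 : StrongDual ℝ (StrongDual ℝ A) →L[ℝ] StrongDual ℝ (StrongDual ℝ (StrongDual ℝ A)) →L[ℝ]
    StrongDual ℝ (StrongDual ℝ (StrongDual ℝ A)) :=
  (ext1 (fArens A).flip).flip

/-- Right action of `A**` (first Arens product) on `A***`. -/
def dualRight2 : StrongDual ℝ (StrongDual ℝ (StrongDual ℝ A)) →L[ℝ] StrongDual ℝ (StrongDual ℝ A) →L[ℝ]
    StrongDual ℝ (StrongDual ℝ (StrongDual ℝ A)) :=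
  ext1 (fArens A)

end ArensSetup

section BimoduleSetup

set_option maxHeartbeats 1000000

open Filter Topology ContinuousLinearMap NormedSpace

/-- A Banach `A`-bimodule: bounded bilinear left and right actions satisfying the
usual compatibility axioms. -/
structure BanachBimodule (A X : Type*) [NonUnitalNormedRing A] [NormedSpace ℝ A]
    [SMulCommClass ℝ A A] [IsScalarTower ℝ A A]
    [NormedAddCommGroup X] [NormedSpace ℝ X] [CompleteSpace X] where
  l : A →L[ℝ] X →L[ℝ] X
  r : X →L[ℝ] A →L[ℝ] X
  l_mul : ∀ a b x, l (a * b) x = l a (l b x)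
  r_mul : ∀ x a b, r (r x a) b = r x (a * b)
  l_r : ∀ a x b, l a (r x b) = r (l a x) b

variable {A X : Type*} [NonUnitalNormedRing A] [NormedSpace ℝ A]
  [SMulCommClass ℝ A A] [IsScalarTower ℝ A A] [CompleteSpace A]
  [NormedAddCommGroup X] [NormedSpace ℝ X] [CompleteSpace X]

/-- Left action of `A` on `X*`: `⟨a·f, x⟩ = ⟨f, x·a⟩`. -/
noncomputable def modDualLeft (M : BanachBimodule A X) : A →L[ℝ] StrongDual ℝ X →L[ℝ] StrongDual ℝ X :=
  (ext1 M.r.flip).flip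

/-- Right action of `A` on `X*`: `⟨f·a, x⟩ = ⟨f, a·x⟩`. -/
noncomputable def modDualRight (M : BanachBimodule A X) : StrongDual ℝ X →L[ℝ] A →L[ℝ] StrongDual ℝ X :=
  ext1 M.l

/-- Left action of `A**` on `X**` (first Arens extension). -/
noncomputable def modL2 (M : BanachBimodule A X) :
    StrongDual ℝ (StrongDual ℝ A) →L[ℝ] StrongDual ℝ (StrongDual ℝ X) →L[ℝ] StrongDual ℝ (StrongDual ℝ X) :=
  ext3 M.l

/-- Right action of `A**` on `X**` (first Arens extension); `modR2 M x'' a'' = x''a''`. -/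
noncomputable def modR2 (M : BanachBimodule A X) :
    StrongDual ℝ (StrongDual ℝ X) →L[ℝ] StrongDual ℝ (StrongDual ℝ A) →L[ℝ] StrongDual ℝ (StrongDual ℝ X) :=
  ext3 M.r

/-- Left action of `A**` on `X***`: `⟨a''·x''', x''⟩ = ⟨x''', x''a''⟩`. -/
noncomputable def modL3 (M : BanachBimodule A X) :
    StrongDual ℝ (StrongDual ℝ A) →L[ℝ] StrongDual ℝ (StrongDual ℝ (StrongDual ℝ X)) →L[ℝ] StrongDual ℝ (StrongDual ℝ (StrongDual ℝ X)) :=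
  (ext1 (modR2 M).flip).flip

/-- Right action of `A**` on `X***`: `⟨x'''·a'', x''⟩ = ⟨x''', a''x''⟩`. -/
noncomputable def modR3 (M : BanachBimodule A X) :
    StrongDual ℝ (StrongDual ℝ (StrongDual ℝ X)) →L[ℝ] StrongDual ℝ (StrongDual ℝ A) →L[ℝ] StrongDual ℝ (StrongDual ℝ (StrongDual ℝ X)) :=
  ext1 (modL2 M)

end BimoduleSetup

section DerivationSetup

variable {B Y : Type*} [SeminormedAddCommGroup B] [NormedSpace ℝ B]
  [SeminormedAddCommGroup Y] [NormedSpace ℝ Y]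

/-- `D` is a derivation with respect to the multiplication `m` and the module
actions `l`, `r`. -/
def IsDeriv (m : B →L[ℝ] B →L[ℝ] B) (l : B →L[ℝ] Y →L[ℝ] Y)
    (r : Y →L[ℝ] B →L[ℝ] Y) (D : B →L[ℝ] Y) : Prop :=
  ∀ a b, D (m a b) = l a (D b) + r (D a) b

/-- `D` is an inner derivation: `D a = a·y − y·a` for some fixed `y`. -/
def IsInner (l : B →L[ℝ] Y →L[ℝ] Y) (r : Y →L[ℝ] B →L[ℝ] Y) (D : B →L[ℝ] Y) : Prop :=
  ∃ y, ∀ a, D a = l a y - r y a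

/-- `D` is a `T-S`-derivation: `D(ab) = T(a)·D(b) + D(a)·S(b)`. -/
def IsTSDeriv (m : B →L[ℝ] B →L[ℝ] B) (l : B →L[ℝ] Y →L[ℝ] Y)
    (r : Y →L[ℝ] B →L[ℝ] Y) (T S : B →L[ℝ] B) (D : B →L[ℝ] Y) : Prop :=
  ∀ a b, D (m a b) = l (T a) (D b) + r (D a) (S b)

/-- `D` is an inner `T-S`-derivation: `D a = T(a)·y − y·S(a)` for some fixed `y`. -/
def IsTSInner (l : B →L[ℝ] Y →L[ℝ] Y) (r : Y →L[ℝ] B →L[ℝ] Y)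
    (T S : B →L[ℝ] B) (D : B →L[ℝ] Y) : Prop :=
  ∃ y, ∀ a, D a = l (T a) y - r y (S a)

end DerivationSetup


section Statements
set_option maxHeartbeats 1000000
open Filter Topology ContinuousLinearMap NormedSpace

variable {A : Type*} [NonUnitalNormedRing A] [NormedSpace ℝ A]
  [SMulCommClass ℝ A A] [IsScalarTower ℝ A A] [CompleteSpace A]

variable {X : Type*} [NormedAddCommGroup X] [NormedSpace ℝ X] [CompleteSpace X]

/-- A linear functional on a dual space that is continuous for the weak-star topology
is evaluation at a point of the predual. -/
theorem weakStarContinuous_exists_eval {E : Type*} [SeminormedAddCommGroup E]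
    [NormedSpace ℝ E] (g : StrongDual ℝ E →ₗ[ℝ] ℝ)
    (hg : Continuous fun φ : WeakDual ℝ E => g (WeakDual.toStrongDual φ)) :
    ∃ x : E, ∀ φ : StrongDual ℝ E, g φ = φ x := by
  -- continuity at 0
  have h0 : Tendsto (fun φ : WeakDual ℝ E => g (WeakDual.toStrongDual φ))
      (𝓝 0) (𝓝 0) := by
    have := hg.tendsto 0
    simpa using this
  have hs : (fun φ : WeakDual ℝ E => g (WeakDual.toStrongDual φ)) ⁻¹' Set.Ioo (-1 : ℝ) 1
      ∈ 𝓝 (0 : WeakDual ℝ E) := h0 (Ioo_mem_nhds (by norm_num) (by norm_num))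
  -- unfold the induced (weak-star) topology
  change _ ∈ @nhds (WeakDual ℝ E) (TopologicalSpace.induced
    (fun (x : WeakDual ℝ E) (y : E) => topDualPairing ℝ E x y) Pi.topologicalSpace) (0 : WeakDual ℝ E) at hs
  rw [nhds_induced, Filter.mem_comap] at hs
  obtain ⟨t, ht, hsub⟩ := hs
  have h0fun : (fun y : E => topDualPairing ℝ E (0 : WeakDual ℝ E) y) = (0 : E → ℝ) := by
    funext y; rfl
  rw [h0fun, nhds_pi, Filter.mem_pi] at ht
  obtain ⟨I, hIfin, u, hu, husub⟩ := ht
  -- vanishing claim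
  have key : ∀ φ : StrongDual ℝ E, (∀ x ∈ I, φ x = 0) → g φ = 0 := by
    intro φ hφ
    by_contra hne
    set c : ℝ := 2 / g φ with hc
    have hmem : (fun y : E => topDualPairing ℝ E ((c • φ : StrongDual ℝ E) : WeakDual ℝ E) y) ∈ t := by
      apply husub
      intro x hx
      have hz : c * φ x = 0 := by rw [hφ x hx]; ring
      simp only [topDualPairing_apply, ContinuousLinearMap.smul_apply, smul_eq_mul, hz]
      exact mem_of_mem_nhds (hu x)
    have h2 : g (c • φ) ∈ Set.Ioo (-1 : ℝ) 1 := hsub hmem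
    have : g (c • φ) = 2 := by
      rw [map_smul]
      rw [smul_eq_mul, hc]
      exact div_mul_cancel₀ 2 hne
    rw [this] at h2
    norm_num at h2
  -- apply the finite-kernel lemma
  haveI : Finite I := hIfin.to_subtype
  haveI : Fintype I := hIfin.fintype
  set L : I → (StrongDual ℝ E →ₗ[ℝ] ℝ) := fun i =>
    { toFun := fun φ => φ (i : E)
      map_add' := fun φ ψ => rfl
      map_smul' := fun c φ => rfl }
  have hker : ⨅ i : I, LinearMap.ker (L i) ≤ LinearMap.ker g := by
    intro φ hφ
    simp only [Submodule.mem_iInf, LinearMap.mem_ker] at hφ ⊢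
    exact key φ fun x hx => hφ ⟨x, hx⟩
  have hspan := mem_span_of_iInf_ker_le_ker hker
  obtain ⟨c, hc⟩ := (Submodule.mem_span_range_iff_exists_fun ℝ).1 hspan
  refine ⟨∑ i : I, c i • (i : E), fun φ => ?_⟩
  have := LinearMap.congr_fun hc φ
  simp only [LinearMap.coe_sum, Finset.sum_apply, LinearMap.smul_apply] at this
  rw [← this, map_sum]
  simp [L, smul_eq_mul]


/-- If `a'' ↦ x''a''` is weak-star to weak continuous for all `x'' ∈ X**` and
`D : A → X*` is a derivation, then `D''(A**)·X** ⊆ A*`. -/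
theorem secondAdjoint_range_prod_subset (M : BanachBimodule A X)
    (hw : ∀ x'' : StrongDual ℝ (StrongDual ℝ X), WStarToWCont (fun a'' => modR2 M x'' a''))
    (D : A →L[ℝ] StrongDual ℝ X)
    (hD : IsDeriv (ContinuousLinearMap.mul ℝ A) (modDualLeft M) (modDualRight M) D) :
    ∀ (a'' : StrongDual ℝ (StrongDual ℝ A)) (x'' : StrongDual ℝ (StrongDual ℝ X)), ∃ a' : StrongDual ℝ A,
      (adjCLM (adjCLM D) a'').comp (modR2 M x'') = inclusionInDoubleDual ℝ (StrongDual ℝ A) a' := by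
  intro a'' x''
  set g : StrongDual ℝ (StrongDual ℝ A) →L[ℝ] ℝ := (adjCLM (adjCLM D) a'').comp (modR2 M x'') with hg
  have hcont : Continuous fun φ : WeakDual ℝ (StrongDual ℝ A) =>
      g (WeakDual.toStrongDual φ) := by
    have h1 := hw x''
    have h2 : Continuous fun y : WeakSpace ℝ (StrongDual ℝ (StrongDual ℝ X)) =>
        (adjCLM (adjCLM D) a'') y :=
      WeakBilin.eval_continuous ((topDualPairing ℝ (StrongDual ℝ (StrongDual ℝ X))).flip)
        (adjCLM (adjCLM D) a'')
    exact h2.comp h1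
  obtain ⟨a', ha'⟩ := weakStarContinuous_exists_eval (g : StrongDual ℝ (StrongDual ℝ A) →ₗ[ℝ] ℝ) hcont
  refine ⟨a', ?_⟩
  ext φ
  simpa using ha' φ

end Statements
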